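/- Rank-2 lemma: with exchange relations x₁x'₁ = q₂x₂^c + r₂ and x₂x'₂ = q₁x₁^b + r₁ (q_i, r_i invertible coefficients, b, c positive integers), one has ZP[x₁, x₂^{±1}] ∩ ZP[x₁^{±1}, x₂, x'₂] = ZP[x₁, x₂, x'₂], where the intersection is taken inside the field of rational functions in x₁, x₂. -/

import Mathlib

open MvPolynomial

/-- The image of the variable `xᵢ` in the field of rational functions over `R`. -/
noncomputable def Xfrac (R : Type*) [CommRing R] [IsDomain R] (n : ℕ) (i : Fin n) :
    FractionRing (MvPolynomial (Fin n) R) :=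
  algebraMap (MvPolynomial (Fin n) R) _ (MvPolynomial.X i)

namespace RankTwoAux

noncomputable section

set_option linter.unusedSectionVars false

variable (R : Type*) [CommRing R] [IsDomain R]

/-- `R[x][y] → R[X0,X1]`, inner `x ↦ X 0`, outer `y ↦ X 1`. -/
def gHom : Polynomial (Polynomial R) →+* MvPolynomial (Fin 2) R :=
  Polynomial.eval₂RingHom
    (Polynomial.eval₂RingHom MvPolynomial.C (MvPolynomial.X 0)) (MvPolynomial.X 1)

def hHom : MvPolynomial (Fin 2) R →+* Polynomial (Polynomial R) :=
  MvPolynomial.eval₂Hom ((Polynomial.C).comp (Polynomial.C))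
    (fun i => if i = 0 then Polynomial.C Polynomial.X else Polynomial.X)

@[simp] lemma gHom_CC (p : Polynomial R) :
    gHom R (Polynomial.C p) = Polynomial.eval₂ MvPolynomial.C (MvPolynomial.X 0) p := by
  simp [gHom]

@[simp] lemma gHom_X : gHom R Polynomial.X = MvPolynomial.X 1 := by
  simp [gHom]

lemma hg : (hHom R).comp (gHom R) = RingHom.id _ := by
  apply Polynomial.ringHom_ext'
  · apply Polynomial.ringHom_ext'
    · ext r
      simp [gHom, hHom]
    · simp [gHom, hHom]
  · simp [gHom, hHom]

lemma gHom_injective : Function.Injective (gHom R) :=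
  Function.LeftInverse.injective (g := hHom R)
    (fun p => by rw [← RingHom.comp_apply, hg, RingHom.id_apply])

/-- `R[x][y] → Frac(R[X0,X1])`, inner `x ↦ x₁`, outer `y ↦ x₂`. -/
def ΦF : Polynomial (Polynomial R) →+* FractionRing (MvPolynomial (Fin 2) R) :=
  (algebraMap (MvPolynomial (Fin 2) R) (FractionRing (MvPolynomial (Fin 2) R))).comp (gHom R)

lemma ΦF_injective : Function.Injective (ΦF R) :=
  (IsFractionRing.injective _ _).comp (gHom_injective R)

def x1F : FractionRing (MvPolynomial (Fin 2) R) :=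
  algebraMap (MvPolynomial (Fin 2) R) _ (MvPolynomial.X 0)

def x2F : FractionRing (MvPolynomial (Fin 2) R) :=
  algebraMap (MvPolynomial (Fin 2) R) _ (MvPolynomial.X 1)

lemma x2F_ne_zero : x2F R ≠ 0 := by
  intro h
  exact MvPolynomial.X_ne_zero 1 ((map_eq_zero_iff _ (IsFractionRing.injective _ _)).mp h)

lemma x1F_ne_zero : x1F R ≠ 0 := by
  intro h
  exact MvPolynomial.X_ne_zero 0 ((map_eq_zero_iff _ (IsFractionRing.injective _ _)).mp h)

/-- `R[x] → Frac(R[X0,X1])`, `x ↦ x₁`. -/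
def innerHom : Polynomial R →+* FractionRing (MvPolynomial (Fin 2) R) :=
  (ΦF R).comp (Polynomial.C)

lemma innerHom_injective : Function.Injective (innerHom R) :=
  (ΦF_injective R).comp Polynomial.C_injective

@[simp] lemma innerHom_X : innerHom R Polynomial.X = x1F R := by
  simp [innerHom, ΦF, x1F]

@[simp] lemma innerHom_C (r : R) :
    innerHom R (Polynomial.C r) = algebraMap R _ r := by
  have : (gHom R) (Polynomial.C (Polynomial.C r)) = MvPolynomial.C r := by simp
  rw [innerHom, RingHom.comp_apply, ΦF, RingHom.comp_apply, this,
    IsScalarTower.algebraMap_apply R (MvPolynomial (Fin 2) R)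
      (FractionRing (MvPolynomial (Fin 2) R)), MvPolynomial.algebraMap_eq]

lemma ΦF_eq : ΦF R = Polynomial.eval₂RingHom (innerHom R) (x2F R) := by
  apply Polynomial.ringHom_ext'
  · apply Polynomial.ringHom_ext'
    · ext r
      simp [innerHom]
    · simp [innerHom]
  · simp [ΦF, x2F]

/-- `Frac(R[x]) → Frac(R[X0,X1])` extending `innerHom`. -/
def κF : FractionRing (Polynomial R) →+* FractionRing (MvPolynomial (Fin 2) R) :=
  IsFractionRing.lift (innerHom_injective R)

@[simp] lemma κF_a (p : Polynomial R) :
    κF R (algebraMap (Polynomial R) (FractionRing (Polynomial R)) p) = innerHom R p :=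
  IsFractionRing.lift_algebraMap _ _

/-- `Frac(R[x])[T;T⁻¹] → Frac(R[X0,X1])`, `T ↦ x₂`, constants via `κF`. -/
def ΛHom : LaurentPolynomial (FractionRing (Polynomial R)) →+*
    FractionRing (MvPolynomial (Fin 2) R) :=
  letI : Algebra (FractionRing (Polynomial R)) (FractionRing (MvPolynomial (Fin 2) R)) :=
    (κF R).toAlgebra
  ((AddMonoidAlgebra.lift (FractionRing (Polynomial R)) _ ℤ)
    ((Units.coeHom _).comp (zpowersHom _ (Units.mk0 (x2F R) (x2F_ne_zero R))))).toRingHom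

lemma ΛHom_single (n : ℤ) (c : FractionRing (Polynomial R)) :
    ΛHom R (AddMonoidAlgebra.single n c) = κF R c * (x2F R) ^ n := by
  letI : Algebra (FractionRing (Polynomial R)) (FractionRing (MvPolynomial (Fin 2) R)) :=
    (κF R).toAlgebra
  rw [ΛHom, AlgHom.toRingHom_eq_coe, RingHom.coe_coe, AddMonoidAlgebra.lift_single]
  rw [Algebra.smul_def, RingHom.algebraMap_toAlgebra]
  congr 1
  simp [Units.val_zpow_eq_zpow_val]

lemma ΛHom_toLaurent :
    (ΛHom R).comp (Polynomial.toLaurent) = Polynomial.eval₂RingHom (κF R) (x2F R) := by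
  apply Polynomial.ringHom_ext'
  · ext c
    have h1 : (LaurentPolynomial.C c :
        LaurentPolynomial (FractionRing (Polynomial R))) = AddMonoidAlgebra.single 0 c :=
      (LaurentPolynomial.single_eq_C c).symm
    simp only [RingHom.comp_apply]
    rw [Polynomial.toLaurent_C, ← LaurentPolynomial.single_eq_C,
      ΛHom_single, zpow_zero, mul_one, Polynomial.coe_eval₂RingHom, Polynomial.eval₂_C]
  · have h1 : (LaurentPolynomial.T 1 :
        LaurentPolynomial (FractionRing (Polynomial R))) = AddMonoidAlgebra.single 1 1 := rfl
    simp only [RingHom.comp_apply]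
    rw [Polynomial.toLaurent_X, h1, ΛHom_single, map_one, one_mul,
      zpow_one, Polynomial.coe_eval₂RingHom, Polynomial.eval₂_X]

lemma eval₂κ_injective : Function.Injective (Polynomial.eval₂RingHom (κF R) (x2F R)) := by
  rw [injective_iff_map_eq_zero]
  intro p hp
  by_contra hne
  obtain ⟨d, hd⟩ := IsLocalization.exist_integer_multiples
    (nonZeroDivisors (Polynomial R)) p.support (fun i => p.coeff i)
  have hlift : (Polynomial.C ((algebraMap (Polynomial R) (FractionRing (Polynomial R))) d) * p)
      ∈ Polynomial.lifts (algebraMap (Polynomial R) (FractionRing (Polynomial R))) := by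
    rw [Polynomial.lifts_iff_coeff_lifts]
    intro n
    by_cases hn : n ∈ p.support
    · obtain ⟨q, hq⟩ := hd n hn
      refine ⟨q, ?_⟩
      rw [Polynomial.coeff_C_mul, hq, Algebra.smul_def]
    · have h0 : p.coeff n = 0 := Polynomial.notMem_support_iff.mp hn
      exact ⟨0, by simp [Polynomial.coeff_C_mul, h0]⟩
  obtain ⟨Q, hQ⟩ := (Polynomial.mem_lifts _).mp hlift
  have hcomp : (κF R).comp (algebraMap (Polynomial R) (FractionRing (Polynomial R)))
      = innerHom R := RingHom.ext fun q => κF_a R q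
  have hΦQ : ΦF R Q = 0 := by
    have h1 : Polynomial.eval₂ (κF R) (x2F R)
        (Polynomial.C ((algebraMap (Polynomial R) (FractionRing (Polynomial R))) d) * p) = 0 := by
      have hp' : Polynomial.eval₂ (κF R) (x2F R) p = 0 := hp
      rw [Polynomial.eval₂_mul, Polynomial.eval₂_C, hp', mul_zero]
    rw [← hQ, Polynomial.eval₂_map, hcomp] at h1
    rw [ΦF_eq]
    exact h1
  have hQ0 : Q = 0 := ΦF_injective R (by rw [hΦQ, map_zero])
  rw [hQ0, Polynomial.map_zero] at hQ
  have hd0 : ((algebraMap (Polynomial R) (FractionRing (Polynomial R))) d) ≠ 0 := by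
    have : (d : Polynomial R) ≠ 0 := nonZeroDivisors.ne_zero d.2
    exact fun h => this ((map_eq_zero_iff _ (IsFractionRing.injective _ _)).mp h)
  rcases mul_eq_zero.mp hQ.symm with h | h
  · exact hd0 (by simpa using h)
  · exact hne h

lemma ΛHom_injective : Function.Injective (ΛHom R) := by
  rw [injective_iff_map_eq_zero]
  intro f hf
  obtain ⟨n, f', hf'⟩ := f.exists_T_pow
  have h0 : ΛHom R (Polynomial.toLaurent f') = 0 := by
    rw [hf', map_mul, hf, zero_mul]
  have hf'0 : f' = 0 := by
    apply eval₂κ_injective R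
    rw [map_zero, ← ΛHom_toLaurent]
    exact h0
  rw [hf'0, map_zero] at hf'
  calc f = f * (LaurentPolynomial.T n * LaurentPolynomial.T (-n)) := by
        rw [← LaurentPolynomial.T_add, add_neg_cancel, LaurentPolynomial.T_zero, mul_one]
    _ = 0 := by rw [← mul_assoc, ← hf', zero_mul]

/-- `ΛHom` as an `R`-algebra map. -/
def ΛAlg : LaurentPolynomial (FractionRing (Polynomial R)) →ₐ[R]
    FractionRing (MvPolynomial (Fin 2) R) :=
  { ΛHom R with
    commutes' := fun r => by
      have h1 : (algebraMap R (LaurentPolynomial (FractionRing (Polynomial R))) r)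
          = AddMonoidAlgebra.single 0 (algebraMap R (FractionRing (Polynomial R)) r) :=
        congrFun (AddMonoidAlgebra.coe_algebraMap) r
      have h2 : algebraMap R (FractionRing (Polynomial R)) r
          = algebraMap (Polynomial R) (FractionRing (Polynomial R)) (Polynomial.C r) := by
        rw [IsScalarTower.algebraMap_apply R (Polynomial R) (FractionRing (Polynomial R)),
          Polynomial.algebraMap_eq]
      show ΛHom R _ = _
      rw [h1, ΛHom_single, h2, κF_a, innerHom_C, zpow_zero, mul_one] }

@[simp] lemma ΛAlg_apply (f : LaurentPolynomial (FractionRing (Polynomial R))) :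
    ΛAlg R f = ΛHom R f := rfl

def uL : LaurentPolynomial (FractionRing (Polynomial R)) :=
  AddMonoidAlgebra.single 0 (algebraMap (Polynomial R) (FractionRing (Polynomial R)) Polynomial.X)

def vL : LaurentPolynomial (FractionRing (Polynomial R)) :=
  AddMonoidAlgebra.single 0 (algebraMap (Polynomial R) (FractionRing (Polynomial R)) Polynomial.X)⁻¹

def tL : LaurentPolynomial (FractionRing (Polynomial R)) := AddMonoidAlgebra.single 1 1

def tL' : LaurentPolynomial (FractionRing (Polynomial R)) := AddMonoidAlgebra.single (-1) 1

def PqP (q₁ r₁ : Rˣ) (b : ℕ) : Polynomial R :=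
  Polynomial.C (q₁ : R) * Polynomial.X ^ b + Polynomial.C (r₁ : R)

def sL (q₁ r₁ : Rˣ) (b : ℕ) : LaurentPolynomial (FractionRing (Polynomial R)) :=
  AddMonoidAlgebra.single (-1) (algebraMap (Polynomial R) (FractionRing (Polynomial R)) (PqP R q₁ r₁ b))

lemma Λ_uL : ΛHom R (uL R) = x1F R := by
  rw [uL, ΛHom_single, κF_a, innerHom_X, zpow_zero, mul_one]

lemma Λ_vL : ΛHom R (vL R) = (x1F R)⁻¹ := by
  rw [vL, ΛHom_single, map_inv₀, κF_a, innerHom_X, zpow_zero, mul_one]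

lemma Λ_tL : ΛHom R (tL R) = x2F R := by
  rw [tL, ΛHom_single, map_one, one_mul, zpow_one]

lemma Λ_tL' : ΛHom R (tL' R) = (x2F R)⁻¹ := by
  rw [tL', ΛHom_single, map_one, one_mul, zpow_neg_one]

lemma Λ_sL (q₁ r₁ : Rˣ) (b : ℕ) :
    ΛHom R (sL R q₁ r₁ b) =
      (algebraMap R (FractionRing (MvPolynomial (Fin 2) R)) (q₁ : R) * x1F R ^ b +
        algebraMap R (FractionRing (MvPolynomial (Fin 2) R)) (r₁ : R)) * (x2F R)⁻¹ := by
  rw [sL, ΛHom_single, κF_a, zpow_neg_one]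
  congr 1
  rw [PqP, map_add, map_mul, map_pow, innerHom_X, innerHom_C, innerHom_C]

variable (q₁ r₁ : Rˣ) (b : ℕ)

def NC (m : ℤ) : Submodule R (FractionRing (Polynomial R)) where
  carrier := {c | ∃ p : Polynomial R,
    c = algebraMap (Polynomial R) (FractionRing (Polynomial R)) (PqP R q₁ r₁ b ^ (-m).toNat * p)}
  zero_mem' := ⟨0, by rw [mul_zero, map_zero]⟩
  add_mem' := by
    rintro x y ⟨p, rfl⟩ ⟨p', rfl⟩
    exact ⟨p + p', by rw [mul_add, map_add]⟩
  smul_mem' := by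
    rintro r x ⟨p, rfl⟩
    refine ⟨Polynomial.C r * p, ?_⟩
    rw [Algebra.smul_def, IsScalarTower.algebraMap_apply R (Polynomial R)
      (FractionRing (Polynomial R)), Polynomial.algebraMap_eq, ← map_mul]
    congr 1
    ring

lemma NC_mul {i j : ℤ} {c d : FractionRing (Polynomial R)}
    (hc : c ∈ NC R q₁ r₁ b i) (hd : d ∈ NC R q₁ r₁ b j) :
    c * d ∈ NC R q₁ r₁ b (i + j) := by
  obtain ⟨p, rfl⟩ := hc; obtain ⟨p', rfl⟩ := hd
  refine ⟨PqP R q₁ r₁ b ^ ((-i).toNat + (-j).toNat - (-(i + j)).toNat) * (p * p'), ?_⟩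
  rw [← map_mul]
  congr 1
  rw [show PqP R q₁ r₁ b ^ (-(i + j)).toNat *
      (PqP R q₁ r₁ b ^ ((-i).toNat + (-j).toNat - (-(i + j)).toNat) * (p * p'))
      = PqP R q₁ r₁ b ^ ((-(i + j)).toNat + ((-i).toNat + (-j).toNat - (-(i + j)).toNat))
        * (p * p') from by rw [pow_add]; ring]
  rw [show (-(i + j)).toNat + ((-i).toNat + (-j).toNat - (-(i + j)).toNat)
      = (-i).toNat + (-j).toNat from by omega, pow_add]
  ring

lemma NC_aX_pow_mul {m : ℤ} {c : FractionRing (Polynomial R)} (n : ℕ)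
    (hc : c ∈ NC R q₁ r₁ b m) :
    (algebraMap (Polynomial R) (FractionRing (Polynomial R)) Polynomial.X) ^ n * c
      ∈ NC R q₁ r₁ b m := by
  obtain ⟨p, rfl⟩ := hc
  refine ⟨Polynomial.X ^ n * p, ?_⟩
  rw [← map_pow, ← map_mul]
  congr 1
  ring

def NB (m : ℤ) : Submodule R (FractionRing (Polynomial R)) where
  carrier := {c | ∃ n : ℕ,
    (algebraMap (Polynomial R) (FractionRing (Polynomial R)) Polynomial.X) ^ n * c
      ∈ NC R q₁ r₁ b m}
  zero_mem' := ⟨0, by rw [mul_zero]; exact zero_mem _⟩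
  add_mem' := by
    rintro x y ⟨n, hn⟩ ⟨n', hn'⟩
    refine ⟨n + n', ?_⟩
    rw [mul_add]
    apply add_mem
    · have h := NC_aX_pow_mul R q₁ r₁ b n' hn
      convert h using 1
      rw [pow_add]; ring
    · have h := NC_aX_pow_mul R q₁ r₁ b n hn'
      convert h using 1
      rw [pow_add]; ring
  smul_mem' := by
    rintro r x ⟨n, hn⟩
    exact ⟨n, by rw [mul_smul_comm]; exact Submodule.smul_mem _ r hn⟩

lemma NB_mul {i j : ℤ} {c d : FractionRing (Polynomial R)}
    (hc : c ∈ NB R q₁ r₁ b i) (hd : d ∈ NB R q₁ r₁ b j) :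
    c * d ∈ NB R q₁ r₁ b (i + j) := by
  obtain ⟨n, hn⟩ := hc; obtain ⟨n', hn'⟩ := hd
  refine ⟨n + n', ?_⟩
  have h := NC_mul R q₁ r₁ b hn hn'
  convert h using 1
  rw [pow_add]; ring

lemma NC_le_NB (m : ℤ) : NC R q₁ r₁ b m ≤ NB R q₁ r₁ b m :=
  fun c hc => ⟨0, by rw [pow_zero, one_mul]; exact hc⟩

lemma one_mem_NC : (1 : FractionRing (Polynomial R)) ∈ NC R q₁ r₁ b 0 :=
  ⟨1, by simp⟩

/-- The subalgebra of Laurent polynomials whose `m`-th coefficient lies in `N m`. -/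
def grade (N : ℤ → Submodule R (FractionRing (Polynomial R)))
    (h1 : (1 : FractionRing (Polynomial R)) ∈ N 0)
    (hm : ∀ (i j : ℤ) (a c : FractionRing (Polynomial R)),
      a ∈ N i → c ∈ N j → a * c ∈ N (i + j)) :
    Subalgebra R (LaurentPolynomial (FractionRing (Polynomial R))) where
  carrier := {f | ∀ m : ℤ, f.coeff m ∈ N m}
  zero_mem' := fun m => by
    rw [show ((0 : LaurentPolynomial (FractionRing (Polynomial R))).coeff m) = 0 from rfl]
    exact zero_mem _
  add_mem' := by
    intro f g hf hg m
    rw [show ((f + g).coeff m) = f.coeff m + g.coeff m from rfl]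
    exact add_mem (hf m) (hg m)
  one_mem' := by
    intro m
    rw [AddMonoidAlgebra.one_def, AddMonoidAlgebra.coeff_single, Finsupp.single_apply]
    split_ifs with h
    · subst h; exact h1
    · exact zero_mem _
  mul_mem' := by
    intro f g hf hg m
    classical
    rw [AddMonoidAlgebra.coeff_mul]
    apply Submodule.sum_mem
    intro i _
    apply Submodule.sum_mem
    intro j _
    dsimp only
    split_ifs with h
    · exact h ▸ hm i j _ _ (hf i) (hg j)
    · exact zero_mem _
  algebraMap_mem' := by
    intro r m
    have h1' : (algebraMap R (LaurentPolynomial (FractionRing (Polynomial R))) r)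
        = AddMonoidAlgebra.single 0 (algebraMap R (FractionRing (Polynomial R)) r) :=
      congrFun (AddMonoidAlgebra.coe_algebraMap) r
    rw [h1', AddMonoidAlgebra.coeff_single, Finsupp.single_apply]
    split_ifs with h
    · subst h
      rw [Algebra.algebraMap_eq_smul_one]
      exact Submodule.smul_mem _ r h1
    · exact zero_mem _

lemma single_mem_grade (N : ℤ → Submodule R (FractionRing (Polynomial R)))
    (h1 : (1 : FractionRing (Polynomial R)) ∈ N 0)
    (hm : ∀ (i j : ℤ) (a c : FractionRing (Polynomial R)),
      a ∈ N i → c ∈ N j → a * c ∈ N (i + j))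
    {n : ℤ} {c : FractionRing (Polynomial R)} (hc : c ∈ N n) :
    (AddMonoidAlgebra.single n c : LaurentPolynomial (FractionRing (Polynomial R)))
      ∈ grade R N h1 hm := by
  have h : ∀ m : ℤ,
      (AddMonoidAlgebra.single n c : LaurentPolynomial (FractionRing (Polynomial R))).coeff m ∈ N m := by
    intro m
    rw [AddMonoidAlgebra.coeff_single, Finsupp.single_apply]
    split_ifs with h
    · subst h; exact hc
    · exact zero_mem _
  exact h

lemma single_zero_eq_aeval (p : Polynomial R) :
    (AddMonoidAlgebra.single (0 : ℤ)
        (algebraMap (Polynomial R) (FractionRing (Polynomial R)) p)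
      : LaurentPolynomial (FractionRing (Polynomial R)))
      = Polynomial.aeval (uL R) p := by
  have h3 : ∀ r : R, (algebraMap R (LaurentPolynomial (FractionRing (Polynomial R))) r)
      = AddMonoidAlgebra.single 0 (algebraMap R (FractionRing (Polynomial R)) r) :=
    fun r => congrFun (AddMonoidAlgebra.coe_algebraMap) r
  have key : (AddMonoidAlgebra.singleZeroRingHom.comp
        (algebraMap (Polynomial R) (FractionRing (Polynomial R))) :
        Polynomial R →+* LaurentPolynomial (FractionRing (Polynomial R)))
      = (Polynomial.aeval (uL R)).toRingHom := by
    apply Polynomial.ringHom_ext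
    · intro r
      have h2 : algebraMap (Polynomial R) (FractionRing (Polynomial R)) (Polynomial.C r)
          = algebraMap R (FractionRing (Polynomial R)) r := by
        rw [IsScalarTower.algebraMap_apply R (Polynomial R) (FractionRing (Polynomial R)),
          Polynomial.algebraMap_eq]
      show (AddMonoidAlgebra.single (0:ℤ)
          (algebraMap (Polynomial R) (FractionRing (Polynomial R)) (Polynomial.C r))
          : LaurentPolynomial (FractionRing (Polynomial R)))
          = Polynomial.aeval (uL R) (Polynomial.C r)
      rw [h2, Polynomial.aeval_C]
      exact (h3 r).symm
    · show uL R = Polynomial.aeval (uL R) Polynomial.X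
      rw [Polynomial.aeval_X]
  exact RingHom.congr_fun key p

lemma single_zero_mem_adjoin (S : Set (LaurentPolynomial (FractionRing (Polynomial R))))
    (hu : uL R ∈ S) (p : Polynomial R) :
    (AddMonoidAlgebra.single (0 : ℤ)
        (algebraMap (Polynomial R) (FractionRing (Polynomial R)) p)
      : LaurentPolynomial (FractionRing (Polynomial R)))
      ∈ Algebra.adjoin R S := by
  rw [single_zero_eq_aeval]
  exact Algebra.adjoin_mono (Set.singleton_subset_iff.mpr hu)
    (Polynomial.aeval_mem_adjoin_singleton R (uL R))

lemma mem_adjoin_of_coeffs (f : LaurentPolynomial (FractionRing (Polynomial R)))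
    (hf : ∀ m : ℤ, f.coeff m ∈ NC R q₁ r₁ b m) :
    f ∈ Algebra.adjoin R ({uL R, tL R, sL R q₁ r₁ b} :
      Set (LaurentPolynomial (FractionRing (Polynomial R)))) := by
  rw [← AddMonoidAlgebra.sum_coeff_single f]
  have hsum : f.coeff.sum AddMonoidAlgebra.single
      = ∑ m ∈ f.coeff.support, AddMonoidAlgebra.single m (f.coeff m) := rfl
  rw [hsum]
  apply Subalgebra.sum_mem
  intro m _
  obtain ⟨p, hp⟩ := hf m
  rcases le_or_gt 0 m with hm0 | hm0
  · have hk : (-m).toNat = 0 := by omega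
    rw [hp, hk, pow_zero, one_mul, LaurentPolynomial.single_eq_C_mul_T]
    have hT : (LaurentPolynomial.T m :
        LaurentPolynomial (FractionRing (Polynomial R))) = tL R ^ m.toNat := by
      have ht : tL R = LaurentPolynomial.T 1 := rfl
      rw [ht, LaurentPolynomial.T_pow]
      congr 1
      omega
    rw [hT]
    exact mul_mem (single_zero_mem_adjoin R _ (by simp) p)
      (pow_mem (Algebra.subset_adjoin (by simp)) _)
  · rw [hp, LaurentPolynomial.single_eq_C_mul_T]
    have hsm : LaurentPolynomial.C (algebraMap (Polynomial R) (FractionRing (Polynomial R))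
          (PqP R q₁ r₁ b ^ (-m).toNat * p)) * LaurentPolynomial.T m
        = LaurentPolynomial.C (algebraMap (Polynomial R) (FractionRing (Polynomial R)) p)
          * (sL R q₁ r₁ b) ^ (-m).toNat := by
      have hs : sL R q₁ r₁ b = LaurentPolynomial.C (algebraMap (Polynomial R)
          (FractionRing (Polynomial R)) (PqP R q₁ r₁ b)) * LaurentPolynomial.T (-1) :=
        LaurentPolynomial.single_eq_C_mul_T _ _
      have hval : (algebraMap (Polynomial R) (FractionRing (Polynomial R)))
          (PqP R q₁ r₁ b ^ (-m).toNat * p)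
          = (algebraMap (Polynomial R) (FractionRing (Polynomial R)) (PqP R q₁ r₁ b))
              ^ (-m).toNat
            * algebraMap (Polynomial R) (FractionRing (Polynomial R)) p := by
        rw [map_mul, map_pow]
      rw [hval, map_mul, map_pow, hs, mul_pow, LaurentPolynomial.T_pow,
        show (((-m).toNat : ℤ) * (-1)) = m from by omega]
      ring
    rw [hsm]
    exact mul_mem (single_zero_mem_adjoin R _ (by simp) p)
      (pow_mem (Algebra.subset_adjoin (by simp)) _)

lemma X_pow_eq (hb : 0 < b) : ∀ (n : ℕ) (p q : Polynomial R) (k : ℕ),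
    Polynomial.X ^ n * q = PqP R q₁ r₁ b ^ k * p →
    ∃ p' : Polynomial R, q = PqP R q₁ r₁ b ^ k * p' := by
  intro n
  induction n with
  | zero =>
    intro p q k h
    rw [pow_zero, one_mul] at h
    exact ⟨p, h⟩
  | succ n ih =>
    intro p q k h
    have h0 : (PqP R q₁ r₁ b ^ k * p).coeff 0 = 0 := by
      rw [← h, show Polynomial.X ^ (n + 1) * q
        = Polynomial.X * (Polynomial.X ^ n * q) from by ring,
        Polynomial.mul_coeff_zero, Polynomial.coeff_X_zero, zero_mul]
    have hP0 : (PqP R q₁ r₁ b).coeff 0 = (r₁ : R) := by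
      rw [PqP, Polynomial.coeff_add, Polynomial.coeff_C_mul, Polynomial.coeff_X_pow,
        Polynomial.coeff_C_zero]
      rw [if_neg (by omega : ¬(0:ℕ) = b), mul_zero, zero_add]
    have hPk0 : (PqP R q₁ r₁ b ^ k).coeff 0 = (r₁ : R) ^ k := by
      rw [← Polynomial.constantCoeff_apply, map_pow, Polynomial.constantCoeff_apply, hP0]
    rw [Polynomial.mul_coeff_zero, hPk0] at h0
    have hp0 : p.coeff 0 = 0 := by
      rcases mul_eq_zero.mp h0 with h' | h'
      · exact absurd h' (pow_ne_zero _ (Units.ne_zero r₁))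
      · exact h'
    obtain ⟨p', rfl⟩ := Polynomial.X_dvd_iff.mpr hp0
    have h2 : Polynomial.X * (Polynomial.X ^ n * q)
        = Polynomial.X * (PqP R q₁ r₁ b ^ k * p') := by
      rw [show Polynomial.X * (Polynomial.X ^ n * q)
        = Polynomial.X ^ (n + 1) * q from by ring, h]
      ring
    exact ih p' q k (mul_left_cancel₀ Polynomial.X_ne_zero h2)

lemma mem_NC_of_nonneg (m : ℤ) (hm : 0 ≤ m) (p : Polynomial R) :
    algebraMap (Polynomial R) (FractionRing (Polynomial R)) p ∈ NC R q₁ r₁ b m :=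
  ⟨p, by rw [show (-m).toNat = 0 from by omega, pow_zero, one_mul]⟩

lemma one_mem_NC' (m : ℤ) (hm : 0 ≤ m) : (1 : FractionRing (Polynomial R)) ∈ NC R q₁ r₁ b m :=
  ⟨1, by rw [show (-m).toNat = 0 from by omega]; simp⟩

lemma aX_ne_zero :
    algebraMap (Polynomial R) (FractionRing (Polynomial R)) Polynomial.X ≠ 0 := fun h =>
  Polynomial.X_ne_zero ((map_eq_zero_iff _ (IsFractionRing.injective _ _)).mp h)

theorem L_main (hb : 0 < b) :
    Algebra.adjoin R ({uL R, tL R, tL' R} :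
        Set (LaurentPolynomial (FractionRing (Polynomial R)))) ⊓
      Algebra.adjoin R ({uL R, vL R, tL R, sL R q₁ r₁ b} :
        Set (LaurentPolynomial (FractionRing (Polynomial R)))) =
    Algebra.adjoin R ({uL R, tL R, sL R q₁ r₁ b} :
        Set (LaurentPolynomial (FractionRing (Polynomial R)))) := by
  have hmA : ∀ (i j : ℤ) (a c : FractionRing (Polynomial R)),
      a ∈ (fun _ : ℤ => NC R q₁ r₁ b 0) i → c ∈ (fun _ : ℤ => NC R q₁ r₁ b 0) j →
      a * c ∈ (fun _ : ℤ => NC R q₁ r₁ b 0) (i + j) := by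
    intro i j a c ha hc
    have h := NC_mul R q₁ r₁ b (i := 0) (j := 0) ha hc
    simpa using h
  have hmB : ∀ (i j : ℤ) (a c : FractionRing (Polynomial R)),
      a ∈ NB R q₁ r₁ b i → c ∈ NB R q₁ r₁ b j → a * c ∈ NB R q₁ r₁ b (i + j) :=
    fun i j a c ha hc => NB_mul R q₁ r₁ b ha hc
  have h1B : (1 : FractionRing (Polynomial R)) ∈ NB R q₁ r₁ b 0 :=
    NC_le_NB R q₁ r₁ b 0 (one_mem_NC R q₁ r₁ b)
  apply le_antisymm
  · rintro f ⟨hfA, hfB⟩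
    have hA : ∀ m : ℤ, f.coeff m ∈ NC R q₁ r₁ b 0 := by
      have hle : Algebra.adjoin R ({uL R, tL R, tL' R} :
          Set (LaurentPolynomial (FractionRing (Polynomial R))))
          ≤ grade R (fun _ => NC R q₁ r₁ b 0) (one_mem_NC R q₁ r₁ b) hmA := by
        apply Algebra.adjoin_le
        rintro x hx
        simp only [Set.mem_insert_iff, Set.mem_singleton_iff] at hx
        rcases hx with rfl | rfl | rfl
        · exact single_mem_grade R _ _ _ (mem_NC_of_nonneg R q₁ r₁ b 0 le_rfl Polynomial.X)
        · exact single_mem_grade R _ _ _ (one_mem_NC R q₁ r₁ b)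
        · exact single_mem_grade R _ _ _ (one_mem_NC R q₁ r₁ b)
      exact hle hfA
    have hB : ∀ m : ℤ, f.coeff m ∈ NB R q₁ r₁ b m := by
      have hle : Algebra.adjoin R ({uL R, vL R, tL R, sL R q₁ r₁ b} :
          Set (LaurentPolynomial (FractionRing (Polynomial R))))
          ≤ grade R (NB R q₁ r₁ b) h1B hmB := by
        apply Algebra.adjoin_le
        rintro x hx
        simp only [Set.mem_insert_iff, Set.mem_singleton_iff] at hx
        rcases hx with rfl | rfl | rfl | rfl
        · exact single_mem_grade R _ _ _
            (NC_le_NB R q₁ r₁ b 0 (mem_NC_of_nonneg R q₁ r₁ b 0 le_rfl Polynomial.X))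
        · refine single_mem_grade R _ _ _ ⟨1, ?_⟩
          rw [pow_one, mul_inv_cancel₀ (aX_ne_zero R)]
          exact one_mem_NC R q₁ r₁ b
        · exact single_mem_grade R _ _ _
            (NC_le_NB R q₁ r₁ b 1 (one_mem_NC' R q₁ r₁ b 1 (by omega)))
        · refine single_mem_grade R _ _ _ (NC_le_NB R q₁ r₁ b (-1) ⟨1, ?_⟩)
          rw [show ((-(-1:ℤ)).toNat) = 1 from by omega, pow_one, mul_one]
      exact hle hfB
    have hC : ∀ m : ℤ, f.coeff m ∈ NC R q₁ r₁ b m := by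
      intro m
      obtain ⟨q, hq⟩ := hA m
      rw [show ((-(0:ℤ)).toNat) = 0 from by omega, pow_zero, one_mul] at hq
      obtain ⟨n, p, hp⟩ := hB m
      rw [hq, ← map_pow, ← map_mul] at hp
      have hpoly := IsFractionRing.injective (Polynomial R) (FractionRing (Polynomial R)) hp
      obtain ⟨p', hp'⟩ := X_pow_eq R q₁ r₁ b hb n p q ((-m).toNat) hpoly
      exact ⟨p', by rw [hq, hp']⟩
    exact mem_adjoin_of_coeffs R q₁ r₁ b f hC
  · apply le_inf
    · apply Algebra.adjoin_le
      rintro x hx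
      simp only [Set.mem_insert_iff, Set.mem_singleton_iff] at hx
      rcases hx with rfl | rfl | rfl
      · exact Algebra.subset_adjoin (by simp)
      · exact Algebra.subset_adjoin (by simp)
      · have hs : sL R q₁ r₁ b = LaurentPolynomial.C (algebraMap (Polynomial R)
            (FractionRing (Polynomial R)) (PqP R q₁ r₁ b)) * LaurentPolynomial.T (-1) :=
          LaurentPolynomial.single_eq_C_mul_T _ _
        rw [hs]
        refine mul_mem (single_zero_mem_adjoin R _ (by simp) _)
          (Algebra.subset_adjoin ?_)
        simp only [Set.mem_insert_iff, Set.mem_singleton_iff]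
        right; right; rfl
    · apply Algebra.adjoin_le
      rintro x hx
      simp only [Set.mem_insert_iff, Set.mem_singleton_iff] at hx
      rcases hx with rfl | rfl | rfl
      · exact Algebra.subset_adjoin (by simp)
      · exact Algebra.subset_adjoin (by simp)
      · exact Algebra.subset_adjoin (by simp)

end

end RankTwoAux

open RankTwoAux

/-- Rank-2 lemma: with the exchange relation `x₂ x'₂ = q₁ x₁^b + r₁`, one has
`ZP[x₁, x₂^{±1}] ∩ ZP[x₁^{±1}, x₂, x'₂] = ZP[x₁, x₂, x'₂]` inside the field of rational
functions in `x₁, x₂`. -/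
theorem rank_two_intersection (R : Type*) [CommRing R] [IsDomain R]
    (q₁ r₁ : Rˣ) (b : ℕ) (hb : 0 < b) :
    letI F := FractionRing (MvPolynomial (Fin 2) R)
    let x₁ : F := Xfrac R 2 0
    let x₂ : F := Xfrac R 2 1
    let x₂' : F := (algebraMap R F (q₁ : R) * x₁ ^ b + algebraMap R F (r₁ : R)) / x₂
    Algebra.adjoin R ({x₁, x₂, x₂⁻¹} : Set F) ⊓
      Algebra.adjoin R ({x₁, x₁⁻¹, x₂, x₂'} : Set F) =
    Algebra.adjoin R ({x₁, x₂, x₂'} : Set F) := by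
  intro x₁ x₂ x₂'
  have hinj : Function.Injective (ΛAlg R) := fun a c h => ΛHom_injective R h
  have hΛu : ΛAlg R (uL R) = x₁ := Λ_uL R
  have hΛv : ΛAlg R (vL R) = x₁⁻¹ := Λ_vL R
  have hΛt : ΛAlg R (tL R) = x₂ := Λ_tL R
  have hΛt' : ΛAlg R (tL' R) = x₂⁻¹ := Λ_tL' R
  have hΛs : ΛAlg R (sL R q₁ r₁ b) = x₂' := by
    rw [ΛAlg_apply, Λ_sL]
    show _ = (algebraMap R (FractionRing (MvPolynomial (Fin 2) R)) (q₁ : R) * x₁ ^ b +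
      algebraMap R (FractionRing (MvPolynomial (Fin 2) R)) (r₁ : R)) / x₂
    rw [div_eq_mul_inv]
    rfl
  have himg1 : (ΛAlg R) '' {uL R, tL R, tL' R} = {x₁, x₂, x₂⁻¹} := by
    rw [Set.image_insert_eq, Set.image_insert_eq, Set.image_singleton, hΛu, hΛt, hΛt']
  have himg2 : (ΛAlg R) '' {uL R, vL R, tL R, sL R q₁ r₁ b} = {x₁, x₁⁻¹, x₂, x₂'} := by
    rw [Set.image_insert_eq, Set.image_insert_eq, Set.image_insert_eq, Set.image_singleton,
      hΛu, hΛv, hΛt, hΛs]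
  have himg3 : (ΛAlg R) '' {uL R, tL R, sL R q₁ r₁ b} = {x₁, x₂, x₂'} := by
    rw [Set.image_insert_eq, Set.image_insert_eq, Set.image_singleton, hΛu, hΛt, hΛs]
  have hmapinf : ∀ S T : Subalgebra R (LaurentPolynomial (FractionRing (Polynomial R))),
      (S.map (ΛAlg R)) ⊓ (T.map (ΛAlg R)) = (S ⊓ T).map (ΛAlg R) := by
    intro S T
    apply le_antisymm
    · rintro x hx
      obtain ⟨h1, h2⟩ := hx
      obtain ⟨a, haS, rfl⟩ := Subalgebra.mem_map.mp h1
      obtain ⟨c, hcT, hca⟩ := Subalgebra.mem_map.mp h2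
      have : c = a := hinj hca
      subst this
      exact Subalgebra.mem_map.mpr ⟨c, ⟨haS, hcT⟩, rfl⟩
    · rintro x hx
      obtain ⟨a, ⟨h1, h2⟩, rfl⟩ := Subalgebra.mem_map.mp hx
      exact ⟨Subalgebra.mem_map.mpr ⟨a, h1, rfl⟩, Subalgebra.mem_map.mpr ⟨a, h2, rfl⟩⟩
  calc
    Algebra.adjoin R ({x₁, x₂, x₂⁻¹} : Set (FractionRing (MvPolynomial (Fin 2) R))) ⊓
        Algebra.adjoin R ({x₁, x₁⁻¹, x₂, x₂'} : Set (FractionRing (MvPolynomial (Fin 2) R)))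
      = (Algebra.adjoin R {uL R, tL R, tL' R}).map (ΛAlg R) ⊓
        (Algebra.adjoin R {uL R, vL R, tL R, sL R q₁ r₁ b}).map (ΛAlg R) := by
        rw [AlgHom.map_adjoin, AlgHom.map_adjoin, himg1, himg2]
    _ = ((Algebra.adjoin R {uL R, tL R, tL' R}) ⊓
        (Algebra.adjoin R {uL R, vL R, tL R, sL R q₁ r₁ b})).map (ΛAlg R) := hmapinf _ _
    _ = (Algebra.adjoin R {uL R, tL R, sL R q₁ r₁ b}).map (ΛAlg R) := by
        rw [L_main R q₁ r₁ b hb]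
    _ = Algebra.adjoin R ({x₁, x₂, x₂'} : Set (FractionRing (MvPolynomial (Fin 2) R))) := by
        rw [AlgHom.map_adjoin, himg3]
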